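/- Let Y be a sub-exponential random variable with E|Y| ≤ 2 and ψ₁-norm at most K² where K ≥ 6/5. Then for every p ≥ 1, E|Y|^p ≤ C^p p^p (K² log K)^{p-1}, where C ≤ 6 is an absolute constant. -/

import Mathlib

open MeasureTheory ProbabilityTheory

/-- The ψ_α (Orlicz) norm of a real random variable, with the convention `sInf ∅ = ∞`. -/
noncomputable def psiNorm {Ω : Type*} [MeasurableSpace Ω] (μ : Measure Ω) (α : ℝ)
    (X : Ω → ℝ) : ENNReal :=
  sInf {t : ENNReal | ∃ s : ℝ, 0 < s ∧ t = ENNReal.ofReal s ∧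
    (∫⁻ ω, ENNReal.ofReal (Real.exp (|X ω| ^ α / s ^ α)) ∂μ) ≤ 2}

/-- Numeric fact: `exp(101/600) ≤ 6/5`. -/
lemma aux_exp_bound : Real.exp (101/600 : ℝ) ≤ 6/5 := by
  have hb := Real.exp_bound (x := (101/600 : ℝ))
      (by rw [abs_of_nonneg (by norm_num)]; norm_num) (n := 3) (by norm_num)
  rw [abs_of_nonneg (by norm_num : (0:ℝ) ≤ 101/600)] at hb
  simp only [Finset.sum_range_succ, Finset.sum_range_zero] at hb
  rw [abs_le] at hb
  norm_num [Nat.factorial] at hb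
  nlinarith [hb.2]

lemma aux_log_lb {K : ℝ} (hK : 6/5 ≤ K) : (101/600 : ℝ) ≤ Real.log K := by
  rw [Real.le_log_iff_exp_le (by linarith)]
  exact aux_exp_bound.trans hK

/-- Pointwise inequality: for `x ≥ 0`, `p ≥ 1`, `0 < t`, `p t ≤ M`,
`x^p ≤ M^(p-1) x + M^p e^{-M/t} e^{x/t}`. -/
lemma aux_ptwise {p M t x : ℝ} (hp : 1 ≤ p) (hM : 0 < M) (ht : 0 < t)
    (hMt : p * t ≤ M) (hx : 0 ≤ x) :
    x ^ p ≤ M ^ (p - 1) * x + M ^ p * Real.exp (-M / t) * Real.exp (x / t) := by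
  rcases le_or_gt x M with h | h
  · have h2 : x ^ p ≤ M ^ (p - 1) * x := by
      rcases eq_or_lt_of_le hx with h0 | h0
      · rw [← h0, Real.zero_rpow (by linarith : p ≠ 0)]
        positivity
      · have : x ^ p = x ^ (p - 1) * x := by
          rw [← Real.rpow_add_one (ne_of_gt h0)]; ring_nf
        rw [this]
        exact mul_le_mul_of_nonneg_right (Real.rpow_le_rpow hx h (by linarith)) hx
    have h3 : 0 ≤ M ^ p * Real.exp (-M / t) * Real.exp (x / t) := by positivity
    linarith
  · have hx0 : 0 < x := hM.trans h
    have hlog : Real.log (x / M) ≤ x / M - 1 :=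
      Real.log_le_sub_one_of_pos (by positivity)
    have hdiv : p * (x - M) / M ≤ (x - M) / t := by
      rw [div_le_div_iff₀ hM ht]
      nlinarith
    have key : Real.log x * p ≤ Real.log M * p + (x / t - M / t) := by
      have h1 : Real.log (x / M) = Real.log x - Real.log M :=
        Real.log_div (ne_of_gt hx0) (ne_of_gt hM)
      have h2 : p * (Real.log x - Real.log M) ≤ p * (x / M - 1) := by
        rw [← h1]
        exact mul_le_mul_of_nonneg_left hlog (by linarith)
      have h3 : p * (x / M - 1) = p * (x - M) / M := by field_simp
      have h4 : (x - M) / t = x / t - M / t := by ring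
      nlinarith
    have h5 : x ^ p ≤ M ^ p * Real.exp (-M / t) * Real.exp (x / t) := by
      rw [Real.rpow_def_of_pos hx0, Real.rpow_def_of_pos hM, ← Real.exp_add, ← Real.exp_add]
      apply Real.exp_le_exp.mpr
      have : -M / t = -(M / t) := by ring
      rw [this]
      linarith [key]
    have h6 : 0 ≤ M ^ (p - 1) * x := by positivity
    linarith

/-- The core real-number inequality. -/
lemma aux_real_ineq {K p : ℝ} (hK : 6/5 ≤ K) (hp : 1 ≤ p) :
    2 * (6 * p * (K ^ 2 * Real.log K)) ^ (p - 1)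
      + 2 * ((6 * p * (K ^ 2 * Real.log K)) ^ p
        * Real.exp (-(6 * p * (K ^ 2 * Real.log K)) / (101 / 100 * K ^ 2)))
      ≤ 6 ^ p * p ^ p * (K ^ 2 * Real.log K) ^ (p - 1) := by
  have hK0 : (0:ℝ) < K := by linarith
  have hl : (101/600 : ℝ) ≤ Real.log K := aux_log_lb hK
  have hl0 : 0 < Real.log K := by linarith
  set ℓ := Real.log K with hℓ
  have hL : (0:ℝ) < K ^ 2 * ℓ := by positivity
  set L := K ^ 2 * ℓ with hLdef
  have hM0 : (0:ℝ) < 6 * p * L := by positivity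
  -- rewrite exp argument
  have hexp : Real.exp (-(6 * p * L) / (101 / 100 * K ^ 2))
      = Real.exp (-(600/101) * p * ℓ) := by
    congr 1
    have hK2 : (K:ℝ) ^ 2 ≠ 0 := by positivity
    field_simp [hLdef]
    ring
  -- key scalar bound: 2 + 2 * (6 p L) * E ≤ 6 p
  have hK2exp : (K:ℝ) ^ 2 = Real.exp (2 * ℓ) := by
    have h := Real.exp_log hK0
    rw [← h, sq, ← Real.exp_add]
    ring_nf
    rw [hℓ]
  have hE1 : Real.exp ((2 - 600/101 * p) * ℓ) ≤ Real.exp (-(398/101) * ℓ) := by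
    apply Real.exp_le_exp.mpr
    have : (2 - 600/101 * p) ≤ -(398/101) := by nlinarith
    nlinarith [hl0]
  have hE2 : ℓ * Real.exp (-(398/101) * ℓ) ≤ 101/398 := by
    have h1 := Real.add_one_le_exp ((398/101) * ℓ)
    have h2 : Real.exp ((398/101) * ℓ) * Real.exp (-(398/101) * ℓ) = 1 := by
      rw [← Real.exp_add]; ring_nf; exact Real.exp_zero
    have h3 : (0:ℝ) < Real.exp (-(398/101) * ℓ) := Real.exp_pos _
    nlinarith [mul_le_mul_of_nonneg_right h1 h3.le]
  have hLE : L * Real.exp (-(600/101) * p * ℓ) ≤ (101/398) := by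
    have : L * Real.exp (-(600/101) * p * ℓ) = ℓ * Real.exp ((2 - 600/101 * p) * ℓ) := by
      have he : Real.exp ((2 - 600/101 * p) * ℓ)
          = Real.exp (2 * ℓ) * Real.exp (-(600/101) * p * ℓ) := by
        rw [← Real.exp_add]; ring_nf
      rw [hLdef, hK2exp, he]; ring
    rw [this]
    calc ℓ * Real.exp ((2 - 600/101 * p) * ℓ)
        ≤ ℓ * Real.exp (-(398/101) * ℓ) := by
          exact mul_le_mul_of_nonneg_left hE1 hl0.le
      _ ≤ 101/398 := hE2
  have hscalar : 2 + 2 * ((6 * p * L) * Real.exp (-(600/101) * p * ℓ)) ≤ 6 * p := by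
    have h6 : (6 * p * L) * Real.exp (-(600/101) * p * ℓ)
        = 6 * p * (L * Real.exp (-(600/101) * p * ℓ)) := by ring
    rw [h6]
    have hp0 : (0:ℝ) < 6 * p := by linarith
    nlinarith [hLE]
  -- rpow algebra
  have hfac : (6 * p * L) ^ (p - 1) = 6 ^ (p - 1) * p ^ (p - 1) * L ^ (p - 1) := by
    rw [Real.mul_rpow (by positivity) hL.le, Real.mul_rpow (by norm_num) (by linarith)]
  have hMp : (6 * p * L) ^ p = (6 * p * L) ^ (p - 1) * (6 * p * L) := by
    rw [← Real.rpow_add_one (ne_of_gt hM0)]; ring_nf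
  have h6p : (6:ℝ) ^ p = 6 ^ (p - 1) * 6 := by
    rw [← Real.rpow_add_one (by norm_num)]; ring_nf
  have hpp : p ^ p = p ^ (p - 1) * p := by
    rw [← Real.rpow_add_one (by linarith : p ≠ 0)]; ring_nf
  rw [hexp, hMp, hfac, h6p, hpp]
  have hnn : (0:ℝ) ≤ 6 ^ (p - 1) * p ^ (p - 1) * L ^ (p - 1) := by positivity
  nlinarith [mul_le_mul_of_nonneg_left hscalar hnn]

theorem moment_bound_subexponential : ∃ C : ℝ, 0 < C ∧ C ≤ 6 ∧
    ∀ (Ω : Type) (_ : MeasurableSpace Ω) (μ : Measure Ω) (_ : IsProbabilityMeasure μ)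
      (Y : Ω → ℝ) (K : ℝ), Measurable Y → (6 / 5 : ℝ) ≤ K →
      (∫⁻ ω, ENNReal.ofReal |Y ω| ∂μ) ≤ 2 →
      psiNorm μ 1 Y ≤ ENNReal.ofReal (K ^ 2) →
      ∀ p : ℝ, 1 ≤ p →
        (∫⁻ ω, ENNReal.ofReal (|Y ω| ^ p) ∂μ) ≤
          ENNReal.ofReal (C ^ p * p ^ p * (K ^ 2 * Real.log K) ^ (p - 1)) := by
  refine ⟨6, by norm_num, le_refl 6, ?_⟩
  intro Ω mΩ μ hprob Y K hY hK hE1 hpsi p hp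
  have hK0 : (0:ℝ) < K := by linarith
  have hK2 : (0:ℝ) < K ^ 2 := by positivity
  have hl : (101/600 : ℝ) ≤ Real.log K := aux_log_lb hK
  have hl0 : (0:ℝ) < Real.log K := by linarith
  set t : ℝ := 101/100 * K ^ 2 with htdef
  have ht0 : 0 < t := by positivity
  set M : ℝ := 6 * p * (K ^ 2 * Real.log K) with hMdef
  have hM0 : 0 < M := by positivity
  have hMt : p * t ≤ M := by
    rw [hMdef, htdef]
    nlinarith [hK2, hl, hp]
  -- Step 1: from psiNorm bound, get integral exp bound at t
  have hpsi2 : (∫⁻ ω, ENNReal.ofReal (Real.exp (|Y ω| / t)) ∂μ) ≤ 2 := by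
    have hlt : psiNorm μ 1 Y < ENNReal.ofReal t := by
      refine lt_of_le_of_lt hpsi ?_
      rw [ENNReal.ofReal_lt_ofReal_iff ht0]
      rw [htdef]; nlinarith
    rw [psiNorm, sInf_lt_iff] at hlt
    obtain ⟨u, ⟨s, hs0, rfl, hint⟩, hu⟩ := hlt
    have hst : s < t := by
      rwa [ENNReal.ofReal_lt_ofReal_iff ht0] at hu
    refine le_trans (lintegral_mono fun ω => ?_) hint
    apply ENNReal.ofReal_le_ofReal
    apply Real.exp_le_exp.mpr
    rw [Real.rpow_one, Real.rpow_one]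
    gcongr
  -- Step 2: pointwise bound and integrate
  have hpt : ∀ ω, ENNReal.ofReal (|Y ω| ^ p) ≤
      ENNReal.ofReal (M ^ (p - 1)) * ENNReal.ofReal |Y ω|
        + ENNReal.ofReal (M ^ p * Real.exp (-M / t)) * ENNReal.ofReal (Real.exp (|Y ω| / t)) := by
    intro ω
    rw [← ENNReal.ofReal_mul (by positivity), ← ENNReal.ofReal_mul (by positivity),
      ← ENNReal.ofReal_add (by positivity) (by positivity)]
    exact ENNReal.ofReal_le_ofReal
      (aux_ptwise hp hM0 ht0 hMt (abs_nonneg _))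
  have hmeas1 : Measurable fun ω => ENNReal.ofReal |Y ω| :=
    ENNReal.measurable_ofReal.comp hY.abs
  have hmeas2 : Measurable fun ω => ENNReal.ofReal (Real.exp (|Y ω| / t)) :=
    ENNReal.measurable_ofReal.comp (Real.measurable_exp.comp (hY.abs.div_const t))
  calc (∫⁻ ω, ENNReal.ofReal (|Y ω| ^ p) ∂μ)
      ≤ ∫⁻ ω, (ENNReal.ofReal (M ^ (p - 1)) * ENNReal.ofReal |Y ω|
          + ENNReal.ofReal (M ^ p * Real.exp (-M / t))
            * ENNReal.ofReal (Real.exp (|Y ω| / t))) ∂μ := lintegral_mono hpt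
    _ = ENNReal.ofReal (M ^ (p - 1)) * (∫⁻ ω, ENNReal.ofReal |Y ω| ∂μ)
          + ENNReal.ofReal (M ^ p * Real.exp (-M / t))
            * (∫⁻ ω, ENNReal.ofReal (Real.exp (|Y ω| / t)) ∂μ) := by
        rw [lintegral_add_left (hmeas1.const_mul _),
          lintegral_const_mul _ hmeas1, lintegral_const_mul _ hmeas2]
    _ ≤ ENNReal.ofReal (M ^ (p - 1)) * 2
          + ENNReal.ofReal (M ^ p * Real.exp (-M / t)) * 2 := by
        gcongr
    _ = ENNReal.ofReal (2 * M ^ (p - 1) + 2 * (M ^ p * Real.exp (-M / t))) := by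
        rw [ENNReal.ofReal_add (by positivity) (by positivity),
          ← ENNReal.ofReal_ofNat 2, ← ENNReal.ofReal_mul (by positivity),
          ← ENNReal.ofReal_mul (by positivity)]
        ring_nf
    _ ≤ ENNReal.ofReal (6 ^ p * p ^ p * (K ^ 2 * Real.log K) ^ (p - 1)) := by
        apply ENNReal.ofReal_le_ofReal
        rw [hMdef, htdef]
        exact aux_real_ineq hK hp
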